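/- (Main Theorem, ND-case, lower estimate.) Define B^{ND} = sup_{−M ≤ n ≤ N} (Σ_{i=−M}^{n} u_i)^(1/q) · (Σ_{j=n}^{N} v̂_j)^(1/p*). If A ≥ 0 is a constant such that (Σ_{n=−M}^{N} u_n |x_n|^q)^(1/q) ≤ A · (Σ_{n=−M}^{N} v_n |x_n − x_{n+1}|^p)^(1/p) holds for every real sequence (x_n)_{n=−M}^{N+1} with x_{N+1} = 0, then A ≥ B^{ND}. -/

import Mathlib

/-- Main Theorem, ND-case, lower estimate. -/
theorem nd_lower (p q : ℝ) (hp : 1 < p) (hpq : p ≤ q)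
    (M N : ℤ) (hMN : -M ≤ N)
    (u v : ℤ → ℝ)
    (hu : ∀ n ∈ Finset.Icc (-M) N, 0 < u n)
    (hv : ∀ n ∈ Finset.Icc (-M) N, 0 < v n)
    (B : ℝ)
    (hB : B = ⨆ n ∈ Finset.Icc (-M) N,
      (∑ i ∈ Finset.Icc (-M) n, u i) ^ (1/q) *
        (∑ j ∈ Finset.Icc n N, v j ^ (1 - p/(p-1))) ^ (1 - 1/p))
    (A : ℝ) (hA : 0 ≤ A)
    (hineq : ∀ x : ℤ → ℝ, x (N+1) = 0 →
      (∑ n ∈ Finset.Icc (-M) N, u n * |x n| ^ q) ^ (1/q) ≤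
        A * (∑ n ∈ Finset.Icc (-M) N, v n * |x n - x (n+1)| ^ p) ^ (1/p)) :
    B ≤ A := by
  have hq : 1 < q := lt_of_lt_of_le hp hpq
  have hp0 : (0:ℝ) < p := by linarith
  have hq0 : (0:ℝ) < q := by linarith
  set a : ℝ := 1 - p/(p-1) with ha
  subst hB
  refine Real.iSup_le (fun n => Real.iSup_le (fun hn => ?_) hA) hA
  obtain ⟨hn1, hn2⟩ := Finset.mem_Icc.mp hn
  set V : ℝ := ∑ j ∈ Finset.Icc n N, v j ^ a with hV
  have hVpos : 0 < V := by
    refine Finset.sum_pos (fun j hj => Real.rpow_pos_of_pos ?_ a)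
      ⟨n, Finset.mem_Icc.mpr ⟨le_refl n, hn2⟩⟩
    obtain ⟨h1, h2⟩ := Finset.mem_Icc.mp hj
    exact hv j (Finset.mem_Icc.mpr ⟨le_trans hn1 h1, h2⟩)
  set x : ℤ → ℝ := fun i => ∑ j ∈ Finset.Icc (max i n) N, v j ^ a with hx
  have hxN : x (N+1) = 0 := by
    have : max (N+1) n = N+1 := max_eq_left (by omega)
    simp [hx, this, Finset.Icc_eq_empty (by omega : ¬ (N+1 ≤ N))]
  have hxle : ∀ i, i ≤ n → x i = V := by
    intro i hi
    simp [hx, hV, max_eq_right hi]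
  -- the RHS sum equals V
  have hrhs : ∑ i ∈ Finset.Icc (-M) N, v i * |x i - x (i+1)| ^ p = V := by
    have hterm : ∀ i ∈ Finset.Icc (-M) N,
        v i * |x i - x (i+1)| ^ p = if n ≤ i then v i ^ a else 0 := by
      intro i hi
      obtain ⟨hi1, hi2⟩ := Finset.mem_Icc.mp hi
      by_cases hni : n ≤ i
      · have hvi : 0 < v i := hv i hi
        have hd : x i - x (i+1) = v i ^ a := by
          have h1 : max i n = i := max_eq_left hni
          have h2 : max (i+1) n = i+1 := max_eq_left (by omega)
          have h3 : Finset.Icc i N = insert i (Finset.Icc (i+1) N) := by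
            ext k; simp only [Finset.mem_Icc, Finset.mem_insert]; omega
          have h4 : i ∉ Finset.Icc (i+1) N := by simp
          simp [hx, h1, h2, h3, Finset.sum_insert h4]
        rw [hd, if_pos hni, abs_of_pos (Real.rpow_pos_of_pos hvi a),
          ← Real.rpow_mul hvi.le]
        nth_rewrite 1 [← Real.rpow_one (v i)]
        rw [← Real.rpow_add hvi]
        congr 1
        have hpne : p - 1 ≠ 0 := by linarith
        rw [ha]
        field_simp
        ring
      · have hd : x i - x (i+1) = 0 := by
          have h1 : max i n = n := max_eq_right (by omega)
          have h2 : max (i+1) n = n := max_eq_right (by omega)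
          simp [hx, h1, h2]
        rw [hd, if_neg hni, abs_zero, Real.zero_rpow (by positivity), mul_zero]
    rw [Finset.sum_congr rfl hterm, Finset.sum_ite, Finset.sum_const_zero, add_zero]
    rw [hV]
    congr 1
    ext k
    simp only [Finset.mem_filter, Finset.mem_Icc]
    omega
  have hineq' := hineq x hxN
  rw [hrhs] at hineq'
  have hU : 0 ≤ ∑ i ∈ Finset.Icc (-M) n, u i := by
    refine Finset.sum_nonneg fun i hi => ?_
    obtain ⟨h1, h2⟩ := Finset.mem_Icc.mp hi
    exact (hu i (Finset.mem_Icc.mpr ⟨h1, le_trans h2 hn2⟩)).le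
  have hlhs : ((∑ i ∈ Finset.Icc (-M) n, u i) * V ^ q) ^ (1/q) ≤
      (∑ i ∈ Finset.Icc (-M) N, u i * |x i| ^ q) ^ (1/q) := by
    refine Real.rpow_le_rpow (by positivity) ?_ (by positivity)
    calc (∑ i ∈ Finset.Icc (-M) n, u i) * V ^ q
        = ∑ i ∈ Finset.Icc (-M) n, u i * |x i| ^ q := by
          rw [Finset.sum_mul]
          refine Finset.sum_congr rfl fun i hi => ?_
          obtain ⟨h1, h2⟩ := Finset.mem_Icc.mp hi
          rw [hxle i h2, abs_of_pos hVpos]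
      _ ≤ _ := Finset.sum_le_sum_of_subset_of_nonneg
          (Finset.Icc_subset_Icc_right hn2)
          (fun i hi _ => by have := hu i hi; positivity)
  have key : (∑ i ∈ Finset.Icc (-M) n, u i) ^ (1/q) * V ≤ A * V ^ (1/p) := by
    have heq : ((∑ i ∈ Finset.Icc (-M) n, u i) * V ^ q) ^ (1/q)
        = (∑ i ∈ Finset.Icc (-M) n, u i) ^ (1/q) * V := by
      rw [Real.mul_rpow hU (by positivity), ← Real.rpow_mul hVpos.le,
        mul_one_div_cancel hq0.ne', Real.rpow_one]
    rw [← heq]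
    exact le_trans hlhs hineq'
  rw [← mul_le_mul_iff_of_pos_right (Real.rpow_pos_of_pos hVpos (1/p))]
  calc (∑ i ∈ Finset.Icc (-M) n, u i) ^ (1/q) * V ^ (1-1/p) * V ^ (1/p)
      = (∑ i ∈ Finset.Icc (-M) n, u i) ^ (1/q) * V := by
        rw [mul_assoc, ← Real.rpow_add hVpos, sub_add_cancel, Real.rpow_one]
    _ ≤ A * V ^ (1/p) := key
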